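/- Let A ⊆ ℤ have Banach density zero. Then: (1) for every x ∈ Z(A), the set {t ∈ ℤ : x_t = 1} has Banach density zero; (2) the point mass δ_e at the all-zero point e = χ(∅) is the unique shift-invariant Borel probability measure on Z(A); (3) {e} is the unique minimal subset of Z(A). -/

import Mathlib

open MeasureTheory

/-- The shift map on `{0,1}^ℤ`. -/
def shiftB (x : ℤ → Bool) : ℤ → Bool := fun n => x (n + 1)

/-- The indicator point `χ(A) ∈ {0,1}^ℤ` of a set `A ⊆ ℤ`. -/
noncomputable def chiB (A : Set ℤ) : ℤ → Bool :=
  fun t => @decide (t ∈ A) (Classical.propDecidable _)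

/-- `B ⊆ ℤ` has Banach density zero: `#(I ∩ B)/#I → 0` as `#I → ∞` over finite intervals. -/
def BanachZero (B : Set ℤ) : Prop :=
  ∀ ε : ℝ, 0 < ε → ∃ N : ℕ, ∀ (a : ℤ) (n : ℕ), N ≤ n →
    ((Set.Ico a (a + n) ∩ B).ncard : ℝ) < ε * n

/-- `Z(A)`: the smallest closed shift-invariant subset of `{0,1}^ℤ` containing `χ(A₁)` for
every `A₁ ⊆ A`. -/
def ZA (A : Set ℤ) : Set (ℤ → Bool) :=
  ⋂₀ {Z : Set (ℤ → Bool) | IsClosed Z ∧ shiftB '' Z = Z ∧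
      ∀ A₁ : Set ℤ, A₁ ⊆ A → chiB A₁ ∈ Z}

/-- A minimal subset for the shift. -/
def IsMinimalShift (M : Set (ℤ → Bool)) : Prop :=
  M.Nonempty ∧ IsClosed M ∧ shiftB '' M = M ∧
    ∀ M' ⊆ M, M'.Nonempty → IsClosed M' → shiftB '' M' = M' → M' = M

section Aux

noncomputable def cnt (x : ℤ → Bool) (a : ℤ) (n : ℕ) : ℕ :=
  ((Finset.Ico a (a + (n:ℤ))).filter (fun t => x t = true)).card

lemma ncard_eq_cnt (x : ℤ → Bool) (a : ℤ) (n : ℕ) :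
    (Set.Ico a (a + (n:ℤ)) ∩ {t | x t = true}).ncard = cnt x a n := by
  rw [cnt, ← Set.ncard_coe_finset]
  congr 1
  ext t
  simp [Set.mem_Ico, and_assoc]

lemma cnt_eq_sum (x : ℤ → Bool) (a : ℤ) (n : ℕ) :
    (cnt x a n : ℝ) = ∑ t ∈ Finset.Ico a (a + (n:ℤ)), (if x t = true then (1:ℝ) else 0) := by
  rw [cnt, Finset.card_filter]
  push_cast
  rfl

lemma cnt_continuous (a : ℤ) (n : ℕ) : Continuous fun x : ℤ → Bool => (cnt x a n : ℝ) := by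
  simp only [cnt_eq_sum]
  apply continuous_finset_sum
  intro t _
  exact Continuous.comp (continuous_of_discreteTopology
    (f := fun b : Bool => if b = true then (1:ℝ) else 0)) (continuous_apply t)

lemma cnt_trans (x : ℤ → Bool) (c a : ℤ) (n : ℕ) :
    cnt (fun m => x (m + c)) a n = cnt x (a + c) n := by
  unfold cnt
  apply Finset.card_bij' (fun t _ => t + c) (fun t _ => t - c) <;> intro t ht <;>
    simp only [Finset.mem_filter, Finset.mem_Ico] at * <;>
    first
      | omega
      | (refine ⟨by omega, ?_⟩; first | exact ht.2 | (have := ht.2; simpa [sub_add_cancel] using this))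

def Zset (ε : ℝ) (N : ℕ) : Set (ℤ → Bool) :=
  {x | ∀ (a : ℤ) (n : ℕ), N ≤ n → (cnt x a n : ℝ) ≤ ε * n}

lemma Zset_closed (ε : ℝ) (N : ℕ) : IsClosed (Zset ε N) := by
  have : Zset ε N = ⋂ (a : ℤ), ⋂ (n : ℕ), ⋂ (_ : N ≤ n),
      {x : ℤ → Bool | (cnt x a n : ℝ) ≤ ε * n} := by
    ext x; simp [Zset]
  rw [this]
  exact isClosed_iInter fun a => isClosed_iInter fun n => isClosed_iInter fun _ =>
    isClosed_le (cnt_continuous a n) continuous_const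

lemma Zset_inv (ε : ℝ) (N : ℕ) : shiftB '' Zset ε N = Zset ε N := by
  have hs : ∀ c : ℤ, ∀ x ∈ Zset ε N, (fun m => x (m + c)) ∈ Zset ε N := by
    intro c x hx a n hn
    rw [cnt_trans]
    exact hx _ n hn
  apply Set.Subset.antisymm
  · rintro _ ⟨x, hx, rfl⟩
    exact hs 1 x hx
  · intro x hx
    refine ⟨fun m => x (m + -1), hs (-1) x hx, ?_⟩
    funext m
    simp [shiftB]

lemma supp_chiB (A₁ : Set ℤ) : {t : ℤ | chiB A₁ t = true} = A₁ := by
  ext t; simp [chiB, decide_eq_true_iff]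

lemma ZA_subset_Zset {A : Set ℤ} {ε : ℝ} {N : ℕ}
    (hN : ∀ (a : ℤ) (n : ℕ), N ≤ n → ((Set.Ico a (a + n) ∩ A).ncard : ℝ) < ε * n) :
    ZA A ⊆ Zset ε N := by
  intro x hx
  apply hx
  refine ⟨Zset_closed ε N, Zset_inv ε N, ?_⟩
  intro A₁ hA₁ a n hn
  rw [← ncard_eq_cnt, supp_chiB]
  have h1 : (Set.Ico a (a + (n:ℤ)) ∩ A₁).ncard ≤ (Set.Ico a (a + (n:ℤ)) ∩ A).ncard :=
    Set.ncard_le_ncard (Set.inter_subset_inter_right _ hA₁)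
      (Set.Finite.inter_of_left (Set.finite_Ico _ _) A)
  calc ((Set.Ico a (a + (n:ℤ)) ∩ A₁).ncard : ℝ) ≤ (Set.Ico a (a + (n:ℤ)) ∩ A).ncard := by
        exact_mod_cast h1
    _ ≤ ε * n := le_of_lt (hN a n hn)

lemma part1 {A : Set ℤ} (hA : BanachZero A) : ∀ x ∈ ZA A, BanachZero {t : ℤ | x t = true} := by
  intro x hx ε hε
  obtain ⟨N, hN⟩ := hA (ε/2) (by linarith)
  refine ⟨max N 1, fun a n hn => ?_⟩
  have hxZ := ZA_subset_Zset hN hx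
  have h1 : (cnt x a n : ℝ) ≤ (ε/2) * n := hxZ a n (le_trans (le_max_left _ _) hn)
  have hn1 : (1:ℝ) ≤ n := by exact_mod_cast le_trans (le_max_right N 1) hn
  rw [ncard_eq_cnt]
  nlinarith

end Aux

-- gap lemma: Banach density zero sets omit arbitrarily long intervals
lemma exists_gap {B : Set ℤ} (hB : BanachZero B) (L : ℕ) (hL : 0 < L) :
    ∃ a : ℤ, ∀ t : ℤ, a ≤ t → t < a + L → t ∉ B := by
  by_contra hcon
  push_neg at hcon
  obtain ⟨N, hN⟩ := hB (1 / (2 * L)) (by positivity)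
  set n := max N 1 with hn
  have hn1 : 1 ≤ n := le_max_right N 1
  choose f hf1 hf2 hf3 using hcon
  set g : ℕ → ℤ := fun k => f ((k : ℤ) * L) with hg
  have hmem : ∀ k < n, g k ∈ Set.Ico (0:ℤ) (0 + ((n * L : ℕ) : ℤ)) ∩ B := by
    intro k hk
    refine ⟨⟨?_, ?_⟩, hf3 _⟩
    · have h0 : (0:ℤ) ≤ (k:ℤ) * L := by positivity
      exact le_trans h0 (hf1 _)
    · have h1 := hf2 ((k:ℤ) * L)
      have h2 : ((k:ℤ) + 1) * L ≤ (n:ℤ) * L := by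
        have : (k:ℤ) + 1 ≤ n := by exact_mod_cast hk
        exact mul_le_mul_of_nonneg_right this (by positivity)
      push_cast
      nlinarith
  have hinj : Set.InjOn g (Finset.range n) := by
    intro k hk k' hk' hkk
    by_contra hne
    rcases lt_or_gt_of_ne hne with h | h
    · have h1 := hf2 ((k:ℤ) * L)
      have h2 := hf1 ((k':ℤ) * L)
      have : (k:ℤ) + 1 ≤ k' := by exact_mod_cast h
      nlinarith [hkk]
    · have h1 := hf2 ((k':ℤ) * L)
      have h2 := hf1 ((k:ℤ) * L)
      have : (k':ℤ) + 1 ≤ k := by exact_mod_cast h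
      nlinarith [hkk]
  have hcard : n ≤ (Set.Ico (0:ℤ) (0 + ((n * L : ℕ) : ℤ)) ∩ B).ncard := by
    have h1 : ((Finset.range n).image g).card = n := by
      rw [Finset.card_image_of_injOn hinj, Finset.card_range]
    have h2 : ((((Finset.range n).image g) : Finset ℤ) : Set ℤ) ⊆
        Set.Ico (0:ℤ) (0 + ((n * L : ℕ) : ℤ)) ∩ B := by
      intro t ht
      simp only [Finset.coe_image, Set.mem_image, Finset.mem_coe, Finset.mem_range] at ht
      obtain ⟨k, hk, rfl⟩ := ht
      exact hmem k hk
    calc n = (((Finset.range n).image g : Finset ℤ) : Set ℤ).ncard := by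
            rw [Set.ncard_coe_finset, h1]
      _ ≤ _ := Set.ncard_le_ncard h2 (Set.Finite.inter_of_left (Set.finite_Ico _ _) B)
  have hlt := hN 0 (n * L) (le_trans (le_max_left N 1) (Nat.le_mul_of_pos_right n hL))
  have hL0 : (0:ℝ) < L := by exact_mod_cast hL
  have hcast : (n:ℝ) ≤ ((Set.Ico (0:ℤ) (0 + ((n * L : ℕ) : ℤ)) ∩ B).ncard : ℝ) := by
    exact_mod_cast hcard
  have hn1' : (1:ℝ) ≤ n := by exact_mod_cast hn1
  have hEq : 1 / (2 * (L:ℝ)) * ((n:ℝ) * L) = (n:ℝ) / 2 := by field_simp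
  push_cast at hlt hcast
  have : (n:ℝ) < (n:ℝ) / 2 := by rw [← hEq]; linarith
  linarith

-- orbit lemma
lemma orbit_mem {M : Set (ℤ → Bool)} (hM : shiftB '' M = M) {x : ℤ → Bool} (hx : x ∈ M) :
    ∀ k : ℤ, (fun m => x (m + k)) ∈ M := by
  intro k
  induction k using Int.induction_on with
  | zero => simpa using hx
  | succ k ih =>
      have he : (fun m => x (m + ((k:ℤ) + 1))) = shiftB (fun m => x (m + (k:ℤ))) := by
        funext m
        simp only [shiftB]
        congr 1
        ring
      rw [he, ← hM]
      exact ⟨_, ih, rfl⟩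
  | pred k ih =>
      rw [← hM] at ih
      obtain ⟨z, hz, hzg⟩ := ih
      have he : (fun m => x (m + (-(k:ℤ) - 1))) = z := by
        funext m
        have h := congrFun hzg (m - 1)
        simp only [shiftB] at h
        rw [show m - 1 + 1 = m by ring] at h
        rw [h]
        congr 1
        ring
      rw [he]
      exact hz

lemma e_mem_ZA (A : Set ℤ) : (fun _ : ℤ => false) ∈ ZA A := by
  intro Z hZ
  have h := hZ.2.2 ∅ (Set.empty_subset A)
  have he : chiB (∅ : Set ℤ) = fun _ : ℤ => false := by
    funext t; simp [chiB]
  rwa [he] at h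

lemma e_minimal : IsMinimalShift {fun _ : ℤ => false} := by
  refine ⟨⟨_, rfl⟩, isClosed_singleton, ?_, ?_⟩
  · rw [Set.image_singleton]
    congr 1
  · intro M' hsub hne _ _
    exact (Set.Nonempty.subset_singleton_iff hne).mp hsub

lemma part3c {A : Set ℤ} (hA : BanachZero A) (M : Set (ℤ → Bool)) (hsub : M ⊆ ZA A)
    (hMin : IsMinimalShift M) : M = {fun _ : ℤ => false} := by
  obtain ⟨x, hx⟩ := hMin.1
  have hBz := part1 hA x (hsub hx)
  have hblk : ∀ m : ℕ, ∃ a : ℤ, ∀ t : ℤ, a ≤ t → t < a + ((2*m+1 : ℕ) : ℤ) → x t = false := by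
    intro m
    obtain ⟨a, ha⟩ := exists_gap hBz (2*m+1) (by omega)
    exact ⟨a, fun t h1 h2 => Bool.eq_false_iff.mpr (ha t h1 h2)⟩
  choose a ha using hblk
  set y : ℕ → (ℤ → Bool) := fun m => (fun t => x (t + (a m + m))) with hy
  have hyM : ∀ m, y m ∈ M := fun m => orbit_mem hMin.2.2.1 hx _
  have hyt : ∀ m : ℕ, ∀ t : ℤ, t.natAbs ≤ m → y m t = false := by
    intro m t ht
    apply ha m
    · omega
    · push_cast
      omega
  have htend : Filter.Tendsto y Filter.atTop (nhds (fun _ : ℤ => false)) := by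
    rw [tendsto_pi_nhds]
    intro t
    have hev : ∀ᶠ m in Filter.atTop, (fun _ : ℤ => false) t = y m t :=
      Filter.eventually_atTop.2 ⟨t.natAbs, fun m hm => (hyt m t hm).symm⟩
    exact Filter.Tendsto.congr' hev tendsto_const_nhds
  have heM : (fun _ : ℤ => false) ∈ M :=
    hMin.2.1.mem_of_tendsto htend (Filter.Eventually.of_forall hyM)
  have him : shiftB '' {fun _ : ℤ => false} = {fun _ : ℤ => false} := by
    rw [Set.image_singleton]
    rfl
  exact (hMin.2.2.2 {fun _ : ℤ => false} (Set.singleton_subset_iff.2 heM) ⟨_, rfl⟩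
    isClosed_singleton him).symm

lemma cnt_zero (x : ℤ → Bool) (n : ℕ) :
    ((Finset.range n).filter (fun k : ℕ => x (k:ℤ) = true)).card = cnt x 0 n := by
  unfold cnt
  apply Finset.card_bij' (fun (k : ℕ) _ => (k:ℤ)) (fun (t : ℤ) _ => t.toNat) <;>
    intro t ht <;> simp only [Finset.mem_filter, Finset.mem_Ico, Finset.mem_range,
      zero_add] at * <;>
    first
      | omega
      | (constructor; · omega
         · rw [Int.toNat_of_nonneg (by omega)]; exact ht.2)
      | exact ⟨by omega, ht.2⟩

open ENNReal in
lemma part2 {A : Set ℤ} (hA : BanachZero A) (μ : Measure (ℤ → Bool))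
    (hP : IsProbabilityMeasure μ)
    (hinv : ∀ B : Set (ℤ → Bool), MeasurableSet B → μ (shiftB ⁻¹' B) = μ B)
    (hZ : μ (ZA A) = 1) : μ = Measure.dirac (fun _ => false) := by
  classical
  set U : ℤ → Set (ℤ → Bool) := fun t => {x | x t = true} with hU
  have hUm : ∀ t, MeasurableSet (U t) := by
    intro t
    have h : U t = (fun x : ℤ → Bool => x t) ⁻¹' {true} := by ext x; simp [hU]
    rw [h]; exact (measurable_pi_apply t) (measurableSet_singleton true)
  have hpre : ∀ t : ℤ, shiftB ⁻¹' (U t) = U (t+1) := by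
    intro t; ext x; simp [hU, shiftB]
  have hconst : ∀ t : ℤ, μ (U t) = μ (U 0) := by
    intro t
    induction t using Int.induction_on with
    | zero => rfl
    | succ k ih => rw [← ih, ← hinv (U k) (hUm k), hpre]
    | pred k ih =>
        rw [← ih, ← hinv (U (-(k:ℤ)-1)) (hUm _), hpre]
        norm_num
  have haeZ : ∀ᵐ x ∂μ, x ∈ ZA A := by
    have hm : MeasurableSet (ZA A) := (isClosed_sInter (fun Z hZ' => hZ'.1)).measurableSet
    rw [MeasureTheory.ae_iff]
    have : {x | ¬ x ∈ ZA A} = (ZA A)ᶜ := rfl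
    rw [this, measure_compl hm (measure_ne_top μ _), hZ, measure_univ, tsub_self]
  have hbound : ∀ ε : ℝ, 0 < ε → μ (U 0) ≤ ENNReal.ofReal ε := by
    intro ε hε
    obtain ⟨N, hN⟩ := hA (ε/2) (by linarith)
    set n := max N 1 with hn
    have hn1 : 1 ≤ n := le_max_right N 1
    have hsum : ∑ k ∈ Finset.range n, μ (U (k:ℤ)) =
        ∫⁻ x, ∑ k ∈ Finset.range n, (U (k:ℤ)).indicator 1 x ∂μ := by
      rw [MeasureTheory.lintegral_finset_sum _
        (fun k _ => (measurable_one.indicator (hUm _)))]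
      exact Finset.sum_congr rfl fun k _ =>
        (MeasureTheory.lintegral_indicator_one (hUm _)).symm
    have hpt : ∀ x ∈ ZA A,
        (∑ k ∈ Finset.range n, (U (k:ℤ)).indicator (1 : (ℤ → Bool) → ℝ≥0∞) x)
          ≤ ENNReal.ofReal (ε/2 * n) := by
      intro x hx
      have h1 : ∑ k ∈ Finset.range n, (U (k:ℤ)).indicator (1 : (ℤ → Bool) → ℝ≥0∞) x
          = ((cnt x 0 n : ℕ) : ℝ≥0∞) := by
        rw [← cnt_zero, Finset.card_filter, Nat.cast_sum]
        apply Finset.sum_congr rfl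
        intro k _
        by_cases h : x (k:ℤ) = true <;> simp [Set.indicator, hU, h]
      rw [h1]
      have h2 : ((cnt x 0 n : ℕ) : ℝ) ≤ ε/2 * n :=
        ZA_subset_Zset hN hx 0 n (le_max_left N 1)
      calc ((cnt x 0 n : ℕ) : ℝ≥0∞) = ENNReal.ofReal ((cnt x 0 n : ℕ) : ℝ) := by
            rw [ENNReal.ofReal_natCast]
        _ ≤ ENNReal.ofReal (ε/2 * n) := ENNReal.ofReal_le_ofReal h2
    have hae : ∀ᵐ x ∂μ,
        (∑ k ∈ Finset.range n, (U (k:ℤ)).indicator (1 : (ℤ → Bool) → ℝ≥0∞) x)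
          ≤ ENNReal.ofReal (ε/2 * n) := haeZ.mono hpt
    have hsum0 : ∑ k ∈ Finset.range n, μ (U (k:ℤ)) = (n : ℝ≥0∞) * μ (U 0) := by
      have h1 : ∑ k ∈ Finset.range n, μ (U (k:ℤ)) = ∑ _k ∈ Finset.range n, μ (U 0) :=
        Finset.sum_congr rfl (fun k _ => hconst _)
      rw [h1, Finset.sum_const, Finset.card_range, nsmul_eq_mul]
    have hkey : (n : ℝ≥0∞) * μ (U 0) ≤ ENNReal.ofReal (ε/2 * n) := by
      calc (n : ℝ≥0∞) * μ (U 0) = ∑ k ∈ Finset.range n, μ (U (k:ℤ)) := hsum0.symm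
        _ = _ := hsum
        _ ≤ ∫⁻ _, ENNReal.ofReal (ε/2 * n) ∂μ := MeasureTheory.lintegral_mono_ae hae
        _ = ENNReal.ofReal (ε/2 * n) := by
            rw [MeasureTheory.lintegral_const, measure_univ, mul_one]
    have hsplit : ENNReal.ofReal (ε/2 * n) = (n : ℝ≥0∞) * ENNReal.ofReal (ε/2) := by
      rw [ENNReal.ofReal_mul (by linarith), ENNReal.ofReal_natCast, mul_comm]
    rw [hsplit] at hkey
    have hn0 : (n : ℝ≥0∞) ≠ 0 := by
      simp only [ne_eq, Nat.cast_eq_zero]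
      omega
    have := (ENNReal.mul_le_mul_iff_right hn0 (ENNReal.natCast_ne_top n)).mp hkey
    exact le_trans this (ENNReal.ofReal_le_ofReal (by linarith))
  have hU0 : μ (U 0) = 0 := by
    refine le_antisymm ?_ (zero_le)
    refine ENNReal.le_of_forall_pos_le_add fun δ hδ _ => ?_
    rw [zero_add]
    calc μ (U 0) ≤ ENNReal.ofReal δ := hbound δ (by exact_mod_cast hδ)
      _ = (δ : ℝ≥0∞) := ENNReal.ofReal_coe_nnreal
  have hcompl : μ ({(fun _ : ℤ => false)} : Set (ℤ → Bool))ᶜ = 0 := by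
    have hEq : ({(fun _ : ℤ => false)} : Set (ℤ → Bool))ᶜ = ⋃ t : ℤ, U t := by
      ext x
      simp only [Set.mem_compl_iff, Set.mem_singleton_iff, Set.mem_iUnion, hU,
        Set.mem_setOf_eq, funext_iff]
      push_neg
      constructor
      · rintro ⟨t, ht⟩; exact ⟨t, by simpa using ht⟩
      · rintro ⟨t, ht⟩; exact ⟨t, by simp [ht]⟩
    rw [hEq]
    refine le_antisymm ?_ (zero_le)
    calc μ (⋃ t, U t) ≤ ∑' t, μ (U t) := measure_iUnion_le _
      _ = 0 := by simp [hconst, hU0]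
  ext B hB
  rw [MeasureTheory.Measure.dirac_apply' _ hB]
  by_cases he : (fun _ : ℤ => false) ∈ B
  · have h1 : Bᶜ ⊆ ({(fun _ : ℤ => false)} : Set (ℤ → Bool))ᶜ :=
      Set.compl_subset_compl.mpr (Set.singleton_subset_iff.2 he)
    have h2 : μ Bᶜ = 0 := le_antisymm (le_trans (measure_mono h1) hcompl.le) (zero_le)
    have h3 := measure_add_measure_compl (μ := μ) hB
    rw [h2, add_zero, measure_univ] at h3
    rw [h3, Set.indicator_of_mem he]
    rfl
  · have h1 : B ⊆ ({(fun _ : ℤ => false)} : Set (ℤ → Bool))ᶜ := fun z hz => by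
      simp only [Set.mem_compl_iff, Set.mem_singleton_iff]
      rintro rfl
      exact he hz
    have h2 : μ B = 0 := le_antisymm (le_trans (measure_mono h1) hcompl.le) (zero_le)
    rw [h2, Set.indicator_of_notMem he]

/-- If `A ⊆ ℤ` has Banach density zero then: every `x ∈ Z(A)` has support of Banach density
zero; `δ_e` is the unique shift-invariant Borel probability measure on `Z(A)`; and `{e}` is
the unique minimal subset of `Z(A)`, where `e` is the all-zero point. -/
theorem stmt14 (A : Set ℤ) (hA : BanachZero A) :
    (∀ x ∈ ZA A, BanachZero {t : ℤ | x t = true}) ∧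
    (∀ μ : Measure (ℤ → Bool), IsProbabilityMeasure μ →
      (∀ B : Set (ℤ → Bool), MeasurableSet B → μ (shiftB ⁻¹' B) = μ B) →
      μ (ZA A) = 1 → μ = Measure.dirac (fun _ => false)) ∧
    ((fun _ : ℤ => false) ∈ ZA A ∧ IsMinimalShift {fun _ : ℤ => false} ∧
      ∀ M : Set (ℤ → Bool), M ⊆ ZA A → IsMinimalShift M → M = {fun _ : ℤ => false}) :=
  ⟨part1 hA, fun μ hP hinv hZ => part2 hA μ hP hinv hZ,
    e_mem_ZA A, e_minimal, fun M hsub hMin => part3c hA M hsub hMin⟩
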